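/- Let Q be a quiver whose underlying unoriented graph is a tree. Then every indecomposable representation V of Q in Vect_{F_1} has dimension vector with all entries equal to 0 or 1, the support of V (vertices with nonzero space) is a connected subgraph of Q, and every nonzero edge map between one-dimensional spaces in the support is an isomorphism. -/

import Mathlib

open scoped Classical

/-- A representation of a quiver `Q` (on vertex type `I`) in `Vect_{F₁}`: a finite
pointed set (realized as a `Finset ℕ` containing the basepoint `0`) at each vertex, and
for each edge a basepoint-preserving map that is injective away from the preimage of the
basepoint (a partial bijection). -/
structure CRep (I : Type) [Quiver I] where
  V : I → Finset ℕ
  zero_mem : ∀ i, 0 ∈ V i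
  f : ∀ {i j : I}, (i ⟶ j) → ℕ → ℕ
  mem_f : ∀ {i j : I} (h : i ⟶ j), ∀ x ∈ V i, f h x ∈ V j
  zero_f : ∀ {i j : I} (h : i ⟶ j), f h 0 = 0
  inj_f : ∀ {i j : I} (h : i ⟶ j), ∀ x ∈ V i, ∀ y ∈ V i,
    f h x = f h y → f h x ≠ 0 → x = y

variable {I : Type} [Quiver I]

/-- The composite of the edge maps of `R` along a path in the quiver. -/
def pathMap (R : CRep I) : ∀ {i j : I}, Quiver.Path i j → ℕ → ℕ
  | _, _, .nil => id
  | _, _, .cons p e => R.f e ∘ pathMap R p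

/-- A representation is nilpotent if all composites of edge maps along sufficiently long
paths are the zero map. -/
def CRep.Nilpotent (R : CRep I) : Prop :=
  ∃ N : ℕ, ∀ {i j : I} (p : Quiver.Path i j), N ≤ p.length →
    ∀ x ∈ R.V i, pathMap R p x = 0

/-- A subrepresentation: a pointed subset at each vertex, stable under all edge maps. -/
structure SubRep (R : CRep I) where
  U : I → Finset ℕ
  zero_mem : ∀ i, 0 ∈ U i
  le : ∀ i, U i ⊆ R.V i
  stable : ∀ {i j : I} (h : i ⟶ j), ∀ x ∈ U i, R.f h x ∈ U j

/-- Isomorphism of representations: vertex-wise pointed bijections commuting with all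
edge maps. -/
def CRep.Iso (M N : CRep I) : Prop :=
  ∃ φ : I → ℕ → ℕ,
    (∀ i, φ i 0 = 0) ∧
    (∀ i, Set.BijOn (φ i) (M.V i) (N.V i)) ∧
    (∀ {i j : I} (h : i ⟶ j), ∀ x ∈ M.V i, φ j (M.f h x) = N.f h (φ i x))

/-- The zero representation. -/
def CRep.IsZero (R : CRep I) : Prop := ∀ i, ∀ x ∈ R.V i, x = 0

/-- Indecomposable: nonzero, and not an (internal) direct sum of two nonzero
subrepresentations. -/
def CRep.Indecomposable (R : CRep I) : Prop :=
  ¬ R.IsZero ∧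
    ¬ ∃ A B : SubRep R, (¬ ∀ i, ∀ x ∈ A.U i, x = 0) ∧ (¬ ∀ i, ∀ x ∈ B.U i, x = 0) ∧
      (∀ i, A.U i ∪ B.U i = R.V i) ∧ (∀ i, A.U i ∩ B.U i = {0})

/-- The underlying unoriented simple graph of the quiver: `i` and `j` are adjacent iff
`i ≠ j` and there is an edge between them in either direction. -/
def underlyingGraph (I : Type) [Quiver I] : SimpleGraph I where
  Adj i j := i ≠ j ∧ (Nonempty (i ⟶ j) ∨ Nonempty (j ⟶ i))
  symm := by
    constructor
    intro i j hij
    exact ⟨hij.1.symm, hij.2.symm⟩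
  loopless := by
    constructor
    intro i hi
    exact hi.1 rfl

/-- The support of a representation: vertices with nonzero space. -/
def suppRep (R : CRep I) : Set I := {i : I | ∃ x ∈ R.V i, x ≠ 0}

section Tree
open SimpleGraph
variable {W : Type} {G : SimpleGraph W}

noncomputable def tp (hG : G.IsTree) (r v : W) : G.Walk r v :=
  (hG.existsUnique_path r v).exists.choose

lemma tp_isPath (hG : G.IsTree) (r v : W) : (tp hG r v).IsPath :=
  (hG.existsUnique_path r v).exists.choose_spec

lemma tp_unique (hG : G.IsTree) {r v : W} (q : G.Walk r v) (hq : q.IsPath) :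
    q = tp hG r v :=
  ((hG.existsUnique_path r v).unique hq (tp_isPath hG r v))

noncomputable def td (hG : G.IsTree) (r v : W) : ℕ := (tp hG r v).length

lemma td_root (hG : G.IsTree) (r : W) : td hG r r = 0 := by
  rw [td, ← tp_unique hG Walk.nil Walk.IsPath.nil]; rfl

lemma eq_root_of_td_eq_zero (hG : G.IsTree) {r v : W} (h : td hG r v = 0) : r = v :=
  Walk.eq_of_length_eq_zero h

lemma td_of_mem (hG : G.IsTree) {r u v : W} (h : G.Adj u v)
    (hv : v ∈ (tp hG r u).support) : td hG r u = td hG r v + 1 := by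
  set p := tp hG r u with hp
  have hsplit := p.take_spec hv
  have htake : (p.takeUntil v hv).IsPath := (tp_isPath hG r u).takeUntil hv
  have hdrop : (p.dropUntil v hv).IsPath := (tp_isPath hG r u).dropUntil hv
  have h1 : p.takeUntil v hv = tp hG r v := tp_unique hG _ htake
  have hsingle : (Walk.cons h.symm Walk.nil : G.Walk v u).IsPath := by
    rw [Walk.cons_isPath_iff]
    exact ⟨Walk.IsPath.nil, by simp [h.ne']⟩
  have h2 : p.dropUntil v hv = Walk.cons h.symm Walk.nil := by
    have hu1 := tp_unique hG _ hdrop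
    have hu2 := tp_unique hG _ hsingle
    rw [hu1, hu2]
  have := congrArg Walk.length hsplit
  rw [Walk.length_append, h1, h2] at this
  simp only [Walk.length_cons, Walk.length_nil] at this
  rw [td, td, ← hp, ← this]

lemma tp_concat (hG : G.IsTree) {r u v : W} (h : G.Adj u v)
    (hv : v ∉ (tp hG r u).support) :
    tp hG r v = (tp hG r u).concat h ∧ td hG r v = td hG r u + 1 := by
  have hpath : ((tp hG r u).concat h).IsPath := by
    rw [← Walk.isPath_reverse_iff, Walk.reverse_concat, Walk.cons_isPath_iff]
    refine ⟨(tp_isPath hG r u).reverse, by simpa using hv⟩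
  have := tp_unique hG _ hpath
  refine ⟨this.symm, ?_⟩
  rw [td, td, ← this, Walk.length_concat]

lemma td_adj (hG : G.IsTree) {r u v : W} (h : G.Adj u v) :
    td hG r v = td hG r u + 1 ∨ td hG r u = td hG r v + 1 := by
  by_cases hv : v ∈ (tp hG r u).support
  · exact Or.inr (td_of_mem hG h hv)
  · exact Or.inl (tp_concat hG h hv).2

lemma td_parent_unique (hG : G.IsTree) {r u w v : W} (hu : G.Adj u v) (hw : G.Adj w v)
    (hdu : td hG r u + 1 = td hG r v) (hdw : td hG r w + 1 = td hG r v) : u = w := by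
  have hvu : v ∉ (tp hG r u).support := by
    intro hmem
    have := td_of_mem hG hu hmem
    omega
  have hvw : v ∉ (tp hG r w).support := by
    intro hmem
    have := td_of_mem hG hw hmem
    omega
  have h1 := (tp_concat hG hu hvu).1
  have h2 := (tp_concat hG hw hvw).1
  have := Walk.concat_inj (h1.symm.trans h2)
  exact this.choose

end Tree

-- =================== chain machinery ===================

def SStep (R : CRep I) : I × ℕ → I × ℕ → Prop := fun a b =>
  a.2 ∈ R.V a.1 ∧ b.2 ∈ R.V b.1 ∧ a.2 ≠ 0 ∧ b.2 ≠ 0 ∧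
    ((∃ e : a.1 ⟶ b.1, R.f e a.2 = b.2) ∨ (∃ e : b.1 ⟶ a.1, R.f e b.2 = a.2))

def Conn (R : CRep I) : I × ℕ → I × ℕ → Prop := Relation.ReflTransGen (SStep R)

lemma sstep_symm {R : CRep I} : Symmetric (SStep R) := by
  rintro a b ⟨h1, h2, h3, h4, h5⟩
  exact ⟨h2, h1, h4, h3, h5.symm⟩

lemma conn_symm {R : CRep I} {a b : I × ℕ} (h : Conn R a b) : Conn R b a :=
  haveI : Std.Symm (SStep R) := ⟨fun a b h => sstep_symm h⟩
  Relation.ReflTransGen.symmetric.symm _ _ h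

lemma conn_of_indec {R : CRep I} (hR : R.Indecomposable) {i₀ : I} {x₀ : ℕ}
    (h0 : x₀ ∈ R.V i₀) (hx0 : x₀ ≠ 0) {j : I} {z : ℕ} (hz : z ∈ R.V j) (hz0 : z ≠ 0) :
    Conn R (i₀, x₀) (j, z) := by
  by_contra hnc
  set A : SubRep R :=
    { U := fun i => insert 0 ((R.V i).filter (fun x => Conn R (i₀, x₀) (i, x)))
      zero_mem := fun i => Finset.mem_insert_self _ _
      le := fun i => Finset.insert_subset (R.zero_mem i) (Finset.filter_subset _ _)
      stable := by
        intro i j e x hx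
        by_cases hx0' : x = 0
        · subst hx0'
          rw [R.zero_f]
          exact Finset.mem_insert_self _ _
        · have hx' : x ∈ (R.V i).filter (fun x => Conn R (i₀, x₀) (i, x)) := by
            rcases Finset.mem_insert.mp hx with h | h
            · exact absurd h hx0'
            · exact h
          obtain ⟨hxV, hconn⟩ := Finset.mem_filter.mp hx'
          by_cases hy0 : R.f e x = 0
          · rw [hy0]; exact Finset.mem_insert_self _ _
          · refine Finset.mem_insert_of_mem (Finset.mem_filter.mpr ⟨R.mem_f e x hxV, ?_⟩)
            exact hconn.tail ⟨hxV, R.mem_f e x hxV, hx0', hy0, Or.inl ⟨e, rfl⟩⟩ } with hA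
  set B : SubRep R :=
    { U := fun i => insert 0 ((R.V i).filter (fun x => x ≠ 0 ∧ ¬ Conn R (i₀, x₀) (i, x)))
      zero_mem := fun i => Finset.mem_insert_self _ _
      le := fun i => Finset.insert_subset (R.zero_mem i) (Finset.filter_subset _ _)
      stable := by
        intro i j e x hx
        by_cases hx0' : x = 0
        · subst hx0'
          rw [R.zero_f]
          exact Finset.mem_insert_self _ _
        · have hx' : x ∈ (R.V i).filter (fun x => x ≠ 0 ∧ ¬ Conn R (i₀, x₀) (i, x)) := by
            rcases Finset.mem_insert.mp hx with h | h
            · exact absurd h hx0'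
            · exact h
          obtain ⟨hxV, -, hnconn⟩ := Finset.mem_filter.mp hx'
          by_cases hy0 : R.f e x = 0
          · rw [hy0]; exact Finset.mem_insert_self _ _
          · refine Finset.mem_insert_of_mem (Finset.mem_filter.mpr
              ⟨R.mem_f e x hxV, hy0, ?_⟩)
            intro hc
            exact hnconn (hc.tail ⟨R.mem_f e x hxV, hxV, hy0, hx0', Or.inr ⟨e, rfl⟩⟩) } with hB
  refine hR.2 ⟨A, B, ?_, ?_, ?_, ?_⟩
  · intro hzero
    have : x₀ ∈ A.U i₀ := by
      refine Finset.mem_insert_of_mem (Finset.mem_filter.mpr ⟨h0, Relation.ReflTransGen.refl⟩)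
    exact hx0 (hzero i₀ x₀ this)
  · intro hzero
    have : z ∈ B.U j :=
      Finset.mem_insert_of_mem (Finset.mem_filter.mpr ⟨hz, hz0, hnc⟩)
    exact hz0 (hzero j z this)
  · intro i
    ext x
    simp only [Finset.mem_union, hA, hB, Finset.mem_insert, Finset.mem_filter]
    constructor
    · rintro ((rfl | h) | (rfl | h))
      · exact R.zero_mem i
      · exact h.1
      · exact R.zero_mem i
      · exact h.1
    · intro hx
      by_cases hx0' : x = 0
      · exact Or.inl (Or.inl hx0')
      · by_cases hc : Conn R (i₀, x₀) (i, x)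
        · exact Or.inl (Or.inr ⟨hx, hc⟩)
        · exact Or.inr (Or.inr ⟨hx, hx0', hc⟩)
  · intro i
    ext x
    simp only [Finset.mem_inter, hA, hB, Finset.mem_insert, Finset.mem_filter,
      Finset.mem_singleton]
    constructor
    · rintro ⟨h1 | h1, h2 | h2⟩
      · exact h1
      · exact h1
      · exact h2
      · exact absurd h1.2 h2.2.2
    · rintro rfl
      exact ⟨Or.inl rfl, Or.inl rfl⟩

lemma conn_exists_chain {R : CRep I} {a b : I × ℕ} (h : Conn R a b) :
    ∃ (n : ℕ) (c : ℕ → I × ℕ), c 0 = a ∧ c n = b ∧ ∀ k < n, SStep R (c k) (c (k + 1)) := by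
  induction h with
  | refl => exact ⟨0, fun _ => a, rfl, rfl, fun k hk => absurd hk (Nat.not_lt_zero k)⟩
  | @tail b' c' hab hbc ih =>
    obtain ⟨n, c, h0, hn, hs⟩ := ih
    refine ⟨n + 1, fun k => if k ≤ n then c k else c', ?_, ?_, ?_⟩
    · simp [h0]
    · simp
    · intro k hk
      rcases Nat.lt_or_ge k n with h | h
      · simpa [Nat.le_of_lt h, Nat.succ_le_of_lt h] using hs k h
      · have hkn : k = n := by omega
        subst hkn
        simpa [hn] using hbc

lemma nomult_eq (nomult : ∀ i j : I, Subsingleton ((i ⟶ j) ⊕ (j ⟶ i)))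
    {i j : I} (e e' : i ⟶ j) : e = e' := by
  letI := nomult i j
  have h := Subsingleton.elim (Sum.inl e : (i ⟶ j) ⊕ (j ⟶ i)) (Sum.inl e')
  simpa using h

lemma nomult_false (nomult : ∀ i j : I, Subsingleton ((i ⟶ j) ⊕ (j ⟶ i)))
    {i j : I} (e : i ⟶ j) (e' : j ⟶ i) : False := by
  letI := nomult i j
  have h := Subsingleton.elim (Sum.inl e : (i ⟶ j) ⊕ (j ⟶ i)) (Sum.inr e')
  simp at h

lemma cancel {R : CRep I} (nomult : ∀ i j : I, Subsingleton ((i ⟶ j) ⊕ (j ⟶ i)))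
    {a m b : I × ℕ} (h1 : SStep R a m) (h2 : SStep R m b) (hab : b.1 = a.1) : b = a := by
  obtain ⟨i, x⟩ := a
  obtain ⟨v, z⟩ := m
  obtain ⟨j, y⟩ := b
  simp only at hab
  subst hab
  obtain ⟨hxV, hzV, hx0, hz0, hstep1⟩ := h1
  obtain ⟨-, hyV, -, hy0, hstep2⟩ := h2
  simp only at hxV hzV hyV hstep1 hstep2 ⊢
  have hxy : y = x := by
    rcases hstep1 with ⟨e, he⟩ | ⟨e, he⟩
    · rcases hstep2 with ⟨e2, he2⟩ | ⟨e2, he2⟩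
      · exact absurd (nomult_false nomult e e2) (by simp)
      · have he' : e2 = e := nomult_eq nomult e2 e
        subst he'
        exact R.inj_f e2 y hyV x hxV (by rw [he, he2]) (by rw [he2]; exact hz0)
    · rcases hstep2 with ⟨e2, he2⟩ | ⟨e2, he2⟩
      · have he' : e2 = e := nomult_eq nomult e2 e
        subst he'
        rw [← he, ← he2]
      · exact absurd (nomult_false nomult e2 e) (by simp)
  simp [hxy]

lemma chain_reduce {R : CRep I} (nomult : ∀ i j : I, Subsingleton ((i ⟶ j) ⊕ (j ⟶ i))) :
    ∀ (n : ℕ) (c : ℕ → I × ℕ), (∀ k < n, SStep R (c k) (c (k + 1))) →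
      ∃ (m : ℕ) (c' : ℕ → I × ℕ), c' 0 = c 0 ∧ c' m = c n ∧
        (∀ k < m, SStep R (c' k) (c' (k + 1))) ∧
        (∀ k, k + 2 ≤ m → (c' (k + 2)).1 ≠ (c' k).1) := by
  intro n
  induction n using Nat.strong_induction_on with
  | _ n IH =>
    intro c hs
    by_cases hbt : ∃ k, k + 2 ≤ n ∧ (c (k + 2)).1 = (c k).1
    · obtain ⟨k, hk2, hkeq⟩ := hbt
      have hcc : c (k + 2) = c k :=
        cancel nomult (hs k (by omega)) (hs (k + 1) (by omega)) hkeq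
      set c₁ : ℕ → I × ℕ := fun m => if m ≤ k then c m else c (m + 2) with hc₁
      have hs₁ : ∀ m < n - 2, SStep R (c₁ m) (c₁ (m + 1)) := by
        intro m hm
        by_cases h1 : m + 1 ≤ k
        · simpa [hc₁, h1, Nat.le_of_succ_le h1] using hs m (by omega)
        · by_cases h2 : m ≤ k
          · have hmk : m = k := by omega
            subst hmk
            have : c₁ m = c (m + 2) := by simp [hc₁, h2, hcc]
            rw [this]
            have h3 : c₁ (m + 1) = c (m + 3) := by
              simp only [hc₁, if_neg h1]
            rw [h3]
            exact hs (m + 2) (by omega)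
          · have e1 : c₁ m = c (m + 2) := by simp [hc₁, h2]
            have e2 : c₁ (m + 1) = c (m + 3) := by simp [hc₁]; omega
            rw [e1, e2]
            exact hs (m + 2) (by omega)
      have hstart : c₁ 0 = c 0 := by simp [hc₁]
      have hend : c₁ (n - 2) = c n := by
        by_cases h : n - 2 ≤ k
        · have hk' : k = n - 2 := by omega
          have : c₁ (n - 2) = c (n - 2) := by simp [hc₁, h]
          rw [this, ← hk', ← hcc]
          congr 1
          omega
        · have : c₁ (n - 2) = c (n - 2 + 2) := by simp [hc₁, h]
          rw [this]
          congr 1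
          omega
      obtain ⟨m, c', h0', hm', hs', hnb'⟩ := IH (n - 2) (by omega) c₁ hs₁
      exact ⟨m, c', h0'.trans hstart, hm'.trans hend, hs', hnb'⟩
    · push_neg at hbt
      exact ⟨n, c, rfl, rfl, hs, hbt⟩

lemma sstep_adj {R : CRep I} (noloops : ∀ i : I, IsEmpty (i ⟶ i)) {a b : I × ℕ}
    (h : SStep R a b) : (underlyingGraph I).Adj a.1 b.1 := by
  obtain ⟨i, x⟩ := a
  obtain ⟨j, y⟩ := b
  obtain ⟨-, -, -, -, hstep⟩ := h
  simp only at hstep ⊢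
  have hne : i ≠ j := by
    rintro rfl
    rcases hstep with ⟨e, -⟩ | ⟨e, -⟩ <;> exact (noloops i).false e
  refine ⟨hne, ?_⟩
  rcases hstep with ⟨e, -⟩ | ⟨e, -⟩
  · exact Or.inl ⟨e⟩
  · exact Or.inr ⟨e⟩

lemma chain_td (noloops : ∀ i : I, IsEmpty (i ⟶ i))
    (hG : (underlyingGraph I).IsTree) {R : CRep I} (n : ℕ) (c : ℕ → I × ℕ)
    (hs : ∀ k < n, SStep R (c k) (c (k + 1)))
    (hnb : ∀ k, k + 2 ≤ n → (c (k + 2)).1 ≠ (c k).1) :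
    ∀ k ≤ n, td hG (c 0).1 (c k).1 = k := by
  intro k
  induction k using Nat.strong_induction_on with
  | _ k IH =>
    intro hk
    match k, hk with
    | 0, _ => exact td_root hG _
    | 1, hk =>
      have hadj := sstep_adj noloops (hs 0 (by omega))
      rcases td_adj hG (r := (c 0).1) hadj with h | h
      · rw [h, td_root hG]
      · rw [td_root hG] at h
        omega
    | (m + 2), hk =>
      have ih1 : td hG (c 0).1 (c m).1 = m := IH m (by omega) (by omega)
      have ih2 : td hG (c 0).1 (c (m + 1)).1 = m + 1 := IH (m + 1) (by omega) (by omega)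
      have hadj := sstep_adj noloops (hs (m + 1) (by omega))
      rcases td_adj hG (r := (c 0).1) hadj with h | h
      · rw [h, ih2]
      · exfalso
        have hadj0 := sstep_adj noloops (hs m (by omega))
        have := td_parent_unique hG (r := (c 0).1) hadj0 hadj.symm
          (by rw [ih1, ih2]) (by rw [ih2] at h; omega)
        exact hnb m (by omega) this.symm

lemma conn_eq_of_same_vertex (noloops : ∀ i : I, IsEmpty (i ⟶ i))
    (nomult : ∀ i j : I, Subsingleton ((i ⟶ j) ⊕ (j ⟶ i)))
    (hG : (underlyingGraph I).IsTree) {R : CRep I} {i : I} {x y : ℕ}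
    (h : Conn R (i, x) (i, y)) : x = y := by
  obtain ⟨n, c, h0, hn, hs⟩ := conn_exists_chain h
  obtain ⟨m, c', h0', hm', hs', hnb'⟩ := chain_reduce nomult n c hs
  have htd := chain_td noloops hG m c' hs' hnb' m le_rfl
  rw [h0', h0] at htd
  rw [hm', hn] at htd
  rw [td_root hG] at htd
  have hm0 : m = 0 := htd.symm
  have : c' 0 = c' m := by rw [hm0]
  rw [h0', h0, hm', hn] at this
  exact (Prod.mk.injEq _ _ _ _).mp this |>.2

lemma conn_edge (noloops : ∀ i : I, IsEmpty (i ⟶ i))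
    (nomult : ∀ i j : I, Subsingleton ((i ⟶ j) ⊕ (j ⟶ i)))
    (hG : (underlyingGraph I).IsTree) {R : CRep I} {i j : I} {x y : ℕ}
    (e : i ⟶ j) (h : Conn R (i, x) (j, y)) : R.f e x = y := by
  obtain ⟨n, c, h0, hn, hs⟩ := conn_exists_chain h
  obtain ⟨m, c', h0', hm', hs', hnb'⟩ := chain_reduce nomult n c hs
  rw [h0] at h0'
  rw [hn] at hm'
  have hij : i ≠ j := by
    rintro rfl
    exact (noloops i).false e
  have hadj : (underlyingGraph I).Adj i j := ⟨hij, Or.inl ⟨e⟩⟩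
  have htdj : td hG i j = 1 := by
    rcases td_adj hG (r := i) hadj with h' | h'
    · rw [h', td_root hG]
    · rw [td_root hG] at h'
      omega
  have htd := chain_td noloops hG m c' hs' hnb' m le_rfl
  rw [h0', hm'] at htd
  simp only at htd
  rw [htdj] at htd
  have hm1 : m = 1 := htd.symm
  subst hm1
  have hstep := hs' 0 (by omega)
  rw [h0', hm'] at hstep
  obtain ⟨-, -, -, -, hstep⟩ := hstep
  rcases hstep with ⟨e2, he2⟩ | ⟨e2, he2⟩
  · rwa [nomult_eq nomult e e2]
  · exact absurd (nomult_false nomult e e2) (by simp)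


/-- if the underlying unoriented graph of `Q` is a tree (no self-loops, no
multiple edges, connected and acyclic), then every indecomposable representation of `Q`
in `Vect_{F₁}` has all entries of its dimension vector equal to `0` or `1` (each pointed
set has at most `2` elements), its support induces a connected subgraph, and every edge
map between (one-dimensional) spaces in the support is an isomorphism. -/
theorem stmt9 (noloops : ∀ i : I, IsEmpty (i ⟶ i))
    (nomult : ∀ i j : I, Subsingleton ((i ⟶ j) ⊕ (j ⟶ i)))
    (htree : (underlyingGraph I).IsTree)
    (R : CRep I) (hR : R.Indecomposable) :
    (∀ i : I, (R.V i).card ≤ 2) ∧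
      ((underlyingGraph I).induce (suppRep R)).Connected ∧
      (∀ {i j : I} (h : i ⟶ j), i ∈ suppRep R → j ∈ suppRep R →
        Set.BijOn (R.f h) (R.V i) (R.V j)) := by
  obtain ⟨i₀, hi₀⟩ : ∃ i, ∃ x ∈ R.V i, x ≠ 0 := by
    have := hR.1
    rw [CRep.IsZero] at this
    push_neg at this
    obtain ⟨i, x, hx, hx0⟩ := this
    exact ⟨i, x, hx, hx0⟩
  obtain ⟨x₀, hx₀V, hx₀0⟩ := hi₀
  -- any two nonzero elements are connected
  have hconn : ∀ {j : I} {z : ℕ}, z ∈ R.V j → z ≠ 0 → ∀ {j' : I} {z' : ℕ},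
      z' ∈ R.V j' → z' ≠ 0 → Conn R (j, z) (j', z') := by
    intro j z hz hz0 j' z' hz' hz0'
    exact (conn_symm (conn_of_indec hR hx₀V hx₀0 hz hz0)).trans
      (conn_of_indec hR hx₀V hx₀0 hz' hz0')
  have hcard : ∀ i : I, (R.V i).card ≤ 2 := by
    intro i
    by_contra hcard
    push_neg at hcard
    have h1 : 1 < ((R.V i).erase 0).card := by
      have := Finset.card_erase_of_mem (R.zero_mem i)
      omega
    obtain ⟨x, hx, y, hy, hxy⟩ := Finset.one_lt_card.mp h1
    obtain ⟨hx0, hxV⟩ := Finset.mem_erase.mp hx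
    obtain ⟨hy0, hyV⟩ := Finset.mem_erase.mp hy
    exact hxy (conn_eq_of_same_vertex noloops nomult htree
      (hconn hxV hx0 hyV hy0))
  refine ⟨hcard, ?_, ?_⟩
  · -- connectivity of the support
    rw [SimpleGraph.connected_iff]
    refine ⟨?_, ⟨⟨i₀, ⟨x₀, hx₀V, hx₀0⟩⟩⟩⟩
    · rintro ⟨i, hi⟩ ⟨j, hj⟩
      obtain ⟨a, haV, ha0⟩ := hi
      obtain ⟨b, hbV, hb0⟩ := hj
      obtain ⟨n, c, h0, hn, hs⟩ := conn_exists_chain (hconn haV ha0 hbV hb0)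
      have hmem : ∀ k ≤ n, (c k).1 ∈ suppRep R := by
        intro k hk
        rcases Nat.lt_or_ge k n with h | h
        · obtain ⟨h1, -, h3, -, -⟩ := hs k h
          exact ⟨(c k).2, h1, h3⟩
        · have hkn : k = n := by omega
          subst hkn
          rw [hn]
          exact ⟨b, hbV, hb0⟩
      have key : ∀ k (hk : k ≤ n),
          ((underlyingGraph I).induce (suppRep R)).Reachable
            ⟨(c 0).1, hmem 0 (Nat.zero_le n)⟩ ⟨(c k).1, hmem k hk⟩ := by
        intro k
        induction k with
        | zero => intro _; exact SimpleGraph.Reachable.refl _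
        | succ k ih =>
          intro hk
          have hadj := sstep_adj noloops (hs k (by omega))
          have hadj' : ((underlyingGraph I).induce (suppRep R)).Adj
              ⟨(c k).1, hmem k (by omega)⟩ ⟨(c (k + 1)).1, hmem (k + 1) hk⟩ := by
            simpa using hadj
          exact (ih (by omega)).trans hadj'.reachable
      have := key n le_rfl
      have e0 : (⟨(c 0).1, hmem 0 (Nat.zero_le n)⟩ : suppRep R) = ⟨i, ⟨a, haV, ha0⟩⟩ :=
        Subtype.ext (by simp [h0])
      have e1 : (⟨(c n).1, hmem n le_rfl⟩ : suppRep R) = ⟨j, ⟨b, hbV, hb0⟩⟩ :=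
        Subtype.ext (by simp [hn])
      rw [e0, e1] at this
      exact this
  · -- edge maps on the support are bijections
    intro i j e hi hj
    obtain ⟨a, haV, ha0⟩ := hi
    obtain ⟨b, hbV, hb0⟩ := hj
    have hfab : R.f e a = b := conn_edge noloops nomult htree e (hconn haV ha0 hbV hb0)
    have hVi : R.V i = {0, a} := by
      apply (Finset.eq_of_subset_of_card_le ?_ ?_).symm
      · intro t ht
        rcases Finset.mem_insert.mp ht with rfl | ht
        · exact R.zero_mem i
        · rwa [Finset.mem_singleton.mp ht]
      · calc (R.V i).card ≤ 2 := hcard i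
          _ = ({0, a} : Finset ℕ).card := by
            rw [Finset.card_insert_of_notMem (by simp [Ne.symm ha0]), Finset.card_singleton]
    have hVj : R.V j = {0, b} := by
      apply (Finset.eq_of_subset_of_card_le ?_ ?_).symm
      · intro t ht
        rcases Finset.mem_insert.mp ht with rfl | ht
        · exact R.zero_mem j
        · rwa [Finset.mem_singleton.mp ht]
      · calc (R.V j).card ≤ 2 := hcard j
          _ = ({0, b} : Finset ℕ).card := by
            rw [Finset.card_insert_of_notMem (by simp [Ne.symm hb0]), Finset.card_singleton]
    refine ⟨?_, ?_, ?_⟩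
    · intro x hx
      exact R.mem_f e x hx
    · intro x hx y hy hxy
      simp only [Set.mem_setOf_eq, Finset.coe_insert, hVi, Set.mem_insert_iff,
        Finset.coe_singleton, Set.mem_singleton_iff] at hx hy
      rcases hx with rfl | rfl <;> rcases hy with rfl | rfl
      · rfl
      · exfalso; rw [R.zero_f, hfab] at hxy; exact hb0 hxy.symm
      · exfalso; rw [R.zero_f, hfab] at hxy; exact hb0 hxy
      · rfl
    · intro z hz
      simp only [Finset.coe_insert, hVj, Set.mem_insert_iff,
        Finset.coe_singleton, Set.mem_singleton_iff] at hz
      rcases hz with rfl | rfl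
      · exact ⟨0, by simpa using R.zero_mem i, R.zero_f e⟩
      · exact ⟨a, by simpa using haV, hfab⟩
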